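/- arXiv:1910.02986 — 2 statements merged into one kernel-verified Lean document; each statement's English description precedes it below -/
import Mathlib

section
/- (Theorem 1, Consistency of the combined GMM estimator.) Assume: Θ ⊂ ℝ^p is compact with β₀ ∈ Θ; m is continuous on Θ with unique zero at β₀; v(β₀) is symmetric positive definite; sup_{β∈Θ} ‖Ψ_N(β) − m(β)‖ → 0 in probability; V̂_N is invertible with probability tending to one and V̂_N⁻¹ converges in probability to v(β₀)⁻¹; and β̂_c^N : Ω → Θ is a measurable sequence satisfying Q_N(β̂_c^N) ≤ inf_{β∈Θ} Q_N(β) + o_p(1), where Q_N(β) = N Ψ_N(β)ᵀ V̂_N⁻¹ Ψ_N(β). Then β̂_c^N converges in probability to β₀ as N → ∞. -/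
open MeasureTheory ProbabilityTheory Filter Matrix
open scoped ENNReal NNReal RealInnerProductSpace BigOperators Classical

noncomputable section DIMMSetup

/-- The standard Gaussian measure on `EuclideanSpace ℝ ι`: the pushforward of the
`ι`-indexed product of standard real Gaussians under the canonical identification. -/
def stdGaussian (ι : Type*) [Fintype ι] : Measure (EuclideanSpace ℝ ι) :=
  Measure.map (⇑(EuclideanSpace.equiv ι ℝ).symm) (Measure.pi fun _ : ι => gaussianReal 0 1)

/-- The positive semidefinite square root of a matrix (junk value `0` when the matrix is
not positive semidefinite). -/
def matSqrt {ι : Type*} [Fintype ι] [DecidableEq ι] (S : Matrix ι ι ℝ) : Matrix ι ι ℝ :=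
  if h : S.PosSemidef then
    h.1.eigenvectorUnitary.1 * diagonal ((↑) ∘ (√·) ∘ h.1.eigenvalues) *
      (star h.1.eigenvectorUnitary : Matrix ι ι ℝ) else 0

/-- Matrix-vector multiplication as a map of Euclidean spaces. -/
def mulVecE {m n : Type*} [Fintype n] (A : Matrix m n ℝ) (x : EuclideanSpace ℝ n) :
    EuclideanSpace ℝ m :=
  (WithLp.equiv 2 (m → ℝ)).symm (A.mulVec ((WithLp.equiv 2 (n → ℝ)) x))

/-- The multivariate normal distribution `N(0, S)`: the pushforward of the standard Gaussian
under `x ↦ S^{1/2} x`, where `S^{1/2}` is the positive semidefinite square root. -/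
def mvNormal {ι : Type*} [Fintype ι] [DecidableEq ι] (S : Matrix ι ι ℝ) :
    Measure (EuclideanSpace ℝ ι) :=
  (stdGaussian ι).map (fun x => mulVecE (matSqrt S) x)

/-- The chi-squared distribution with `k` degrees of freedom: the law of `‖Z‖²` for a
standard Gaussian `Z` on `ℝ^k`. -/
def chiSq (k : ℕ) : Measure ℝ :=
  (stdGaussian (Fin k)).map (fun x => ‖x‖ ^ 2)

/-- Convergence in distribution: weak convergence of the laws of the random elements
`X N` to the measure `μ`. -/
def ConvInDist {Ω V : Type*} [MeasurableSpace Ω] [TopologicalSpace V] [MeasurableSpace V]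
    (P : Measure Ω) (X : ℕ → Ω → V) (μ : Measure V) : Prop :=
  ∀ f : BoundedContinuousFunction V ℝ,
    Tendsto (fun N => ∫ ω, f (X N ω) ∂P) atTop (nhds (∫ x, f x ∂μ))

/-- The ℓ²→ℓ² operator norm of a matrix (the operator norm induced by the Euclidean norms). -/
def opNorm {m n : Type*} [Fintype m] [Fintype n] [DecidableEq n] (A : Matrix m n ℝ) : ℝ :=
  ‖LinearMap.toContinuousLinearMap (Matrix.toEuclideanLin A)‖

/-- A sequence of real random variables is bounded in probability (`O_p(1)`): for every
`ε > 0` there is `M` with `limsup_N P(|X_N| > M) < ε`. -/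
def BddInProb {Ω : Type*} [MeasurableSpace Ω] (P : Measure Ω) (X : ℕ → Ω → ℝ) : Prop :=
  ∀ ε : ℝ≥0∞, 0 < ε → ∃ M : ℝ, Filter.limsup (fun N => P {ω | M < |X N ω|}) atTop < ε

/-- The `(i,j)`-th `p × p` block of a `(Jp) × (Jp)` matrix, where `ℝ^{Jp}` is indexed by
`Fin J × Fin p` (the pair `(j, a)` encodes coordinate `(j-1)p + a`). -/
def blockOf {J p : ℕ} (W : Matrix (Fin J × Fin p) (Fin J × Fin p) ℝ) (i j : Fin J) :
    Matrix (Fin p) (Fin p) ℝ :=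
  fun a b => W (i, a) (j, b)

/-- The `j`-th `p × p` block of a `(Jp) × p` matrix (the `j`-th block of rows). -/
def rowBlockOf {J p : ℕ} (S : Matrix (Fin J × Fin p) (Fin p) ℝ) (j : Fin J) :
    Matrix (Fin p) (Fin p) ℝ :=
  fun a b => S (j, a) b

end DIMMSetup

open Matrix

section QF
variable {ι : Type*} [Fintype ι]

def qf (W : Matrix ι ι ℝ) (x : EuclideanSpace ℝ ι) : ℝ := ∑ k, ∑ l, x k * (W k l * x l)

lemma abs_coord_le (x : EuclideanSpace ℝ ι) (k : ι) : |x k| ≤ ‖x‖ := by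
  have h := EuclideanSpace.norm_eq x
  have h1 : |x k| = Real.sqrt (‖x k‖^2) := by
    rw [Real.sqrt_sq_eq_abs]; simp [Real.norm_eq_abs, abs_abs]
  rw [h, h1]
  apply Real.sqrt_le_sqrt
  exact Finset.single_le_sum (f := fun i => ‖x i‖^2) (fun i _ => sq_nonneg _) (Finset.mem_univ k)

lemma qf_abs_le (W : Matrix ι ι ℝ) (x : EuclideanSpace ℝ ι) :
    |qf W x| ≤ (∑ k, ∑ l, |W k l|) * ‖x‖^2 := by
  rw [qf, Finset.sum_mul]
  refine (Finset.abs_sum_le_sum_abs _ _).trans (Finset.sum_le_sum fun k _ => ?_)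
  rw [Finset.sum_mul]
  refine (Finset.abs_sum_le_sum_abs _ _).trans (Finset.sum_le_sum fun l _ => ?_)
  rw [abs_mul, abs_mul]
  have h1 := abs_coord_le x k
  have h2 := abs_coord_le x l
  calc |x k| * (|W k l| * |x l|) = |W k l| * (|x k| * |x l|) := by ring
    _ ≤ |W k l| * (‖x‖ * ‖x‖) := by
        exact mul_le_mul_of_nonneg_left
          (mul_le_mul h1 h2 (abs_nonneg _) (norm_nonneg _)) (abs_nonneg _)
    _ = |W k l| * ‖x‖^2 := by ring

lemma qf_sub (A W : Matrix ι ι ℝ) (x : EuclideanSpace ℝ ι) :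
    qf A x = qf W x + qf (A - W) x := by
  simp only [qf, Matrix.sub_apply, ← Finset.sum_add_distrib]
  exact Finset.sum_congr rfl fun k _ => Finset.sum_congr rfl fun l _ => by ring

lemma qf_smul (W : Matrix ι ι ℝ) (t : ℝ) (x : EuclideanSpace ℝ ι) :
    qf W (t • x) = t^2 * qf W x := by
  simp only [qf, Finset.mul_sum, PiLp.smul_apply, smul_eq_mul]
  exact Finset.sum_congr rfl fun k _ => Finset.sum_congr rfl fun l _ => by ring

lemma qf_continuous (W : Matrix ι ι ℝ) : Continuous (qf W) := by
  refine continuous_finset_sum _ fun k _ => continuous_finset_sum _ fun l _ => ?_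
  exact ((EuclideanSpace.proj k).continuous).mul
    (continuous_const.mul (EuclideanSpace.proj l).continuous)

lemma qf_eq_dot (W : Matrix ι ι ℝ) (x : EuclideanSpace ℝ ι) :
    qf W x = dotProduct (star (x : ι → ℝ)) (W *ᵥ (x : ι → ℝ)) := by
  simp only [qf, dotProduct, Matrix.mulVec, star_trivial, Finset.mul_sum]

lemma posdef_coercive [DecidableEq ι] [Nonempty ι] (W : Matrix ι ι ℝ) (hW : W.PosDef) :
    ∃ c : ℝ, 0 < c ∧ ∀ x : EuclideanSpace ℝ ι, c * ‖x‖^2 ≤ qf W x := by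
  have hS : (Metric.sphere (0 : EuclideanSpace ℝ ι) 1).Nonempty := by
    refine ⟨EuclideanSpace.single (Classical.arbitrary ι) 1, ?_⟩
    simp [EuclideanSpace.norm_single]
  obtain ⟨u, huS, humin⟩ := (isCompact_sphere (0 : EuclideanSpace ℝ ι) 1).exists_isMinOn hS
    (qf_continuous W).continuousOn
  have hu1 : ‖u‖ = 1 := by simpa using huS
  have hune : (u : ι → ℝ) ≠ 0 := by
    intro h
    have : u = 0 := by ext i; simpa using congrFun h i
    rw [this] at hu1; simp at hu1
  have hc : 0 < qf W u := by rw [qf_eq_dot]; exact hW.dotProduct_mulVec_pos hune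
  refine ⟨qf W u, hc, fun x => ?_⟩
  rcases eq_or_ne x 0 with rfl | hx
  · simp [qf]
  · have hnx : (0:ℝ) < ‖x‖ := norm_pos_iff.2 hx
    set u' : EuclideanSpace ℝ ι := ‖x‖⁻¹ • x with hu'
    have hu'S : u' ∈ Metric.sphere (0 : EuclideanSpace ℝ ι) 1 := by
      simp [hu', norm_smul, abs_of_pos (inv_pos.2 hnx), inv_mul_cancel₀ hnx.ne']
    have hle : qf W u ≤ qf W u' := humin hu'S
    have hx' : x = ‖x‖ • u' := by
      rw [hu', smul_smul, mul_inv_cancel₀ hnx.ne', one_smul]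
    calc qf W u * ‖x‖^2 ≤ qf W u' * ‖x‖^2 :=
          mul_le_mul_of_nonneg_right hle (sq_nonneg _)
      _ = qf W x := by
          rw [hu', qf_smul]
          field_simp

end QF

/-- **Theorem 1 (Consistency of the combined GMM estimator).**
If `Θ` is compact with `β₀ ∈ Θ`, `m` is continuous on `Θ` with unique zero at `β₀`,
`v(β₀)` is symmetric positive definite, `Ψ_N` converges to `m` uniformly on `Θ` in
probability, `V̂_N` is invertible with probability tending to one with `V̂_N⁻¹ → v(β₀)⁻¹`
in probability, and `β̂_c^N` is a near-minimizer of the GMM objective `Q_N` over `Θ`,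
then `β̂_c^N → β₀` in probability. -/
theorem dimm_theorem1_consistency
    {Ω : Type*} [MeasurableSpace Ω] (P : Measure Ω) [IsProbabilityMeasure P]
    {E : Type*} [MeasurableSpace E]
    (p J : ℕ) (hp : 0 < p) (hJ : 0 < J)
    -- the i.i.d. data
    (Y : ℕ → Ω → E) (hYmeas : ∀ i, Measurable (Y i))
    (hYindep : iIndepFun Y P)
    (hYident : ∀ i, IdentDistrib (Y i) (Y 0) P P)
    -- the estimating function and its population quantities
    (ψ : EuclideanSpace ℝ (Fin p) → E → EuclideanSpace ℝ (Fin J × Fin p))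
    (hψmeas : Measurable fun x : EuclideanSpace ℝ (Fin p) × E => ψ x.1 x.2)
    (β₀ : EuclideanSpace ℝ (Fin p))
    (m : EuclideanSpace ℝ (Fin p) → EuclideanSpace ℝ (Fin J × Fin p))
    (hm : ∀ β, m β = ∫ ω, ψ β (Y 0 ω) ∂P)
    (v : EuclideanSpace ℝ (Fin p) → Matrix (Fin J × Fin p) (Fin J × Fin p) ℝ)
    (hv : ∀ β k l, v β k l = ∫ ω, ψ β (Y 0 ω) k * ψ β (Y 0 ω) l ∂P)
    -- the sample estimating function Ψ_N(β) = (1/N) Σᵢ ψ(β, Yᵢ)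
    (Ψ : ℕ → EuclideanSpace ℝ (Fin p) → Ω → EuclideanSpace ℝ (Fin J × Fin p))
    (hΨ : ∀ N β ω, Ψ N β ω = (N : ℝ)⁻¹ • ∑ i ∈ Finset.range N, ψ β (Y i ω))
    -- Θ compact containing β₀; m continuous on Θ with unique zero at β₀
    (Θ : Set (EuclideanSpace ℝ (Fin p))) (hΘ : IsCompact Θ) (hβ₀Θ : β₀ ∈ Θ)
    (hmcont : ContinuousOn m Θ)
    (hzero : m β₀ = 0) (huniq : ∀ β ∈ Θ, m β = 0 → β = β₀)
    -- v(β₀) symmetric positive definite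
    (hvpd : (v β₀).PosDef)
    -- uniform convergence in probability of Ψ_N to m over Θ
    (hunif : ∀ ε : ℝ, 0 < ε →
      Tendsto (fun N => P {ω | ∃ β ∈ Θ, ε ≤ ‖Ψ N β ω - m β‖}) atTop (nhds (0 : ℝ≥0∞)))
    -- symmetric random weight matrices, invertible with probability tending to one,
    -- with V̂_N⁻¹ → v(β₀)⁻¹ in probability
    (Vhat : ℕ → Ω → Matrix (Fin J × Fin p) (Fin J × Fin p) ℝ)
    (hVmeas : ∀ N k l, Measurable fun ω => Vhat N ω k l)
    (hVsymm : ∀ N ω, (Vhat N ω).IsSymm)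
    (hVunit : Tendsto (fun N => P {ω | IsUnit (Vhat N ω)}) atTop (nhds (1 : ℝ≥0∞)))
    (hVinvconv : ∀ k l,
      TendstoInMeasure P (fun N ω => (Vhat N ω)⁻¹ k l) atTop (fun _ => (v β₀)⁻¹ k l))
    -- the GMM objective Q_N(β) = N Ψ_N(β)ᵀ V̂_N⁻¹ Ψ_N(β)
    (Q : ℕ → EuclideanSpace ℝ (Fin p) → Ω → ℝ)
    (hQ : ∀ N β ω, Q N β ω =
      (N : ℝ) * ∑ k, ∑ l, Ψ N β ω k * ((Vhat N ω)⁻¹ k l * Ψ N β ω l))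
    -- the measurable near-minimizer over Θ: Q_N(β̂_c^N) ≤ inf_Θ Q_N + o_p(1)
    (βc : ℕ → Ω → EuclideanSpace ℝ (Fin p))
    (hβcmeas : ∀ N, Measurable (βc N))
    (hβcΘ : ∀ N ω, βc N ω ∈ Θ)
    (err : ℕ → Ω → ℝ)
    (herr : TendstoInMeasure P err atTop (fun _ => (0 : ℝ)))
    (hmin : ∀ N ω, Q N (βc N ω) ω ≤ sInf ((fun β => Q N β ω) '' Θ) + err N ω) :
    -- conclusion: β̂_c^N → β₀ in probability
    TendstoInMeasure P (fun N => βc N) atTop (fun _ => β₀) := by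
  
  classical
  haveI : Nonempty (Fin J × Fin p) := ⟨(⟨0, hJ⟩, ⟨0, hp⟩)⟩
  obtain ⟨W, hWdef⟩ : ∃ W, W = (v β₀)⁻¹ := ⟨_, rfl⟩
  have hWpd : W.PosDef := hWdef ▸ hvpd.inv
  obtain ⟨c₀, hc₀, hcoer⟩ := posdef_coercive W hWpd
  rw [tendstoInMeasure_iff_dist]
  intro ε hε
  obtain ⟨K, hKdef⟩ : ∃ K : Set (EuclideanSpace ℝ (Fin p)),
      K = {β ∈ Θ | ε ≤ dist β β₀} := ⟨_, rfl⟩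
  by_cases hKne : K.Nonempty
  swap
  · have hempty : ∀ N, {ω | ε ≤ dist (βc N ω) β₀} = (∅ : Set Ω) := by
      intro N
      ext ω
      simp only [Set.mem_setOf_eq, Set.mem_empty_iff_false, iff_false, not_le]
      by_contra h
      push_neg at h
      exact hKne ⟨βc N ω, hKdef ▸ ⟨hβcΘ N ω, h⟩⟩
    have : (fun N => P {ω | ε ≤ dist (βc N ω) β₀}) = fun _ => (0 : ℝ≥0∞) := by
      funext N; rw [hempty N, measure_empty]
    rw [this]
    exact tendsto_const_nhds
  -- K is compact
  have hKΘ : K ⊆ Θ := by rw [hKdef]; exact fun β hβ => hβ.1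
  have hKcl : IsClosed {β : EuclideanSpace ℝ (Fin p) | ε ≤ dist β β₀} :=
    isClosed_le continuous_const (continuous_id.dist continuous_const)
  have hKcomp : IsCompact K := by rw [hKdef]; exact hΘ.inter_right hKcl
  -- minimum of ‖m‖ on K
  obtain ⟨β₁, hβ₁K, hβ₁min⟩ := hKcomp.exists_isMinOn hKne ((hmcont.mono hKΘ).norm)
  obtain ⟨δ, hδdef⟩ : ∃ δ : ℝ, δ = ‖m β₁‖ := ⟨_, rfl⟩
  have hδpos : 0 < δ := by
    rw [hδdef, norm_pos_iff]
    intro h0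
    have hβ₁Θ : β₁ ∈ Θ := hKΘ hβ₁K
    have hne : β₁ = β₀ := huniq β₁ hβ₁Θ h0
    have hd : ε ≤ dist β₁ β₀ := by
      have := hβ₁K; rw [hKdef] at this; exact this.2
    rw [hne, dist_self] at hd
    linarith
  have hδK : ∀ β ∈ K, δ ≤ ‖m β‖ := fun β hβ => hδdef ▸ hβ₁min hβ
  -- constants
  obtain ⟨r, hrdef⟩ : ∃ r : ℝ, r = (Fintype.card (Fin J × Fin p) : ℝ) := ⟨_, rfl⟩
  have hrpos : 0 < r := by
    rw [hrdef]; exact_mod_cast Fintype.card_pos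
  obtain ⟨τ, hτdef⟩ : ∃ τ : ℝ, τ = c₀ / (2 * r ^ 2) := ⟨_, rfl⟩
  have hτpos : 0 < τ := by rw [hτdef]; positivity
  obtain ⟨C₀, hC₀def⟩ : ∃ C₀ : ℝ, C₀ = ∑ k, ∑ l, |W k l| := ⟨_, rfl⟩
  have hC₀nn : 0 ≤ C₀ := by
    rw [hC₀def]
    exact Finset.sum_nonneg fun k _ => Finset.sum_nonneg fun l _ => abs_nonneg _
  obtain ⟨c₁, hc₁def⟩ : ∃ c₁ : ℝ, c₁ = c₀ / 2 := ⟨_, rfl⟩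
  obtain ⟨C₁, hC₁def⟩ : ∃ C₁ : ℝ, C₁ = C₀ + c₀ / 2 := ⟨_, rfl⟩
  have hc₁pos : 0 < c₁ := by rw [hc₁def]; positivity
  have hC₁pos : 0 < C₁ := by rw [hC₁def]; positivity
  obtain ⟨η, hηpos, hηδ, hηsq⟩ :
      ∃ η : ℝ, 0 < η ∧ η ≤ δ / 2 ∧ C₁ * η ^ 2 ≤ c₁ * (δ / 2) ^ 2 / 2 := by
    have hden : (0:ℝ) < c₁ * (δ / 2) ^ 2 / (2 * C₁) := by positivity
    refine ⟨min (δ / 2) (Real.sqrt (c₁ * (δ / 2) ^ 2 / (2 * C₁))),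
      lt_min (by positivity) (Real.sqrt_pos.2 hden), min_le_left _ _, ?_⟩
    have h1 : min (δ / 2) (Real.sqrt (c₁ * (δ / 2) ^ 2 / (2 * C₁)))
        ≤ Real.sqrt (c₁ * (δ / 2) ^ 2 / (2 * C₁)) := min_le_right _ _
    have h0 : 0 ≤ min (δ / 2) (Real.sqrt (c₁ * (δ / 2) ^ 2 / (2 * C₁))) :=
      le_min (by positivity) (Real.sqrt_nonneg _)
    have hs := Real.sq_sqrt hden.le
    have h2 : min (δ / 2) (Real.sqrt (c₁ * (δ / 2) ^ 2 / (2 * C₁))) ^ 2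
        ≤ c₁ * (δ / 2) ^ 2 / (2 * C₁) := by nlinarith
    calc C₁ * min (δ / 2) (Real.sqrt (c₁ * (δ / 2) ^ 2 / (2 * C₁))) ^ 2
        ≤ C₁ * (c₁ * (δ / 2) ^ 2 / (2 * C₁)) := mul_le_mul_of_nonneg_left h2 hC₁pos.le
      _ = c₁ * (δ / 2) ^ 2 / 2 := by
          have hC₁ne : C₁ ≠ 0 := hC₁pos.ne'
          field_simp
  obtain ⟨g, hgdef⟩ : ∃ g : ℝ, g = c₁ * (δ / 2) ^ 2 - C₁ * η ^ 2 := ⟨_, rfl⟩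
  have hgpos : 0 < g := by
    have h2 : 0 < c₁ * (δ / 2) ^ 2 / 2 := by positivity
    rw [hgdef]; linarith
  obtain ⟨N₀, hN₀⟩ := exists_nat_gt (1 / g)
  -- quadratic form bounds for perturbed matrices
  have hquad : ∀ A : Matrix (Fin J × Fin p) (Fin J × Fin p) ℝ,
      (∀ k l, |A k l - W k l| < τ) →
      ∀ x : EuclideanSpace ℝ (Fin J × Fin p),
        c₁ * ‖x‖ ^ 2 ≤ qf A x ∧ qf A x ≤ C₁ * ‖x‖ ^ 2 := by
    intro A hA x
    have hsub := qf_sub A W x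
    have habs := qf_abs_le (A - W) x
    have hWabs := qf_abs_le W x
    have hcoe := hcoer x
    rw [← hC₀def] at hWabs
    have hsum : (∑ k, ∑ l, |(A - W) k l|) ≤ c₀ / 2 := by
      calc (∑ k, ∑ l, |(A - W) k l|)
          ≤ ∑ _k : Fin J × Fin p, ∑ _l : Fin J × Fin p, τ :=
            Finset.sum_le_sum fun k _ => Finset.sum_le_sum fun l _ => by
              simpa [Matrix.sub_apply] using (hA k l).le
        _ = r * (r * τ) := by
            rw [Finset.sum_const, Finset.sum_const, Finset.card_univ,
              nsmul_eq_mul, nsmul_eq_mul, ← hrdef]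
        _ = c₀ / 2 := by
            rw [hτdef]
            field_simp
    have habs' : |qf (A - W) x| ≤ (c₀ / 2) * ‖x‖ ^ 2 :=
      habs.trans (mul_le_mul_of_nonneg_right hsum (sq_nonneg _))
    have h1 := abs_le.1 habs'
    have h2 := abs_le.1 hWabs
    constructor
    · rw [hc₁def, hsub]; linarith [h1.1, h1.2, hcoe]
    · rw [hC₁def, hsub]; linarith [h1.1, h1.2, hcoe, hWabs]
  -- key deterministic implication
  have key : ∀ N, N₀ ≤ N → ∀ ω : Ω,
      (∀ β ∈ Θ, ‖Ψ N β ω - m β‖ < η) →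
      (∀ k l, |(Vhat N ω)⁻¹ k l - W k l| < τ) →
      |err N ω| < 1 →
      dist (βc N ω) β₀ < ε := by
    intro N hN ω h1 h2 h3
    by_contra hcon
    push_neg at hcon
    have hbd := hquad ((Vhat N ω)⁻¹) h2
    have hbK : βc N ω ∈ K := by rw [hKdef]; exact ⟨hβcΘ N ω, hcon⟩
    have hQform : ∀ β, Q N β ω = (N : ℝ) * qf ((Vhat N ω)⁻¹) (Ψ N β ω) := fun β => by
      rw [hQ]; rfl
    have hNn : (0:ℝ) ≤ (N : ℝ) := Nat.cast_nonneg N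
    have hqnn : ∀ β, 0 ≤ Q N β ω := by
      intro β
      rw [hQform]
      have ha := (hbd (Ψ N β ω)).1
      have hb : 0 ≤ c₁ * ‖Ψ N β ω‖ ^ 2 := mul_nonneg hc₁pos.le (sq_nonneg _)
      exact mul_nonneg hNn (le_trans hb ha)
    have hBdd : BddBelow ((fun β => Q N β ω) '' Θ) := by
      refine ⟨0, ?_⟩
      rintro x ⟨β', _, rfl⟩
      exact hqnn β'
    have hInf : sInf ((fun β => Q N β ω) '' Θ) ≤ Q N β₀ ω :=
      csInf_le hBdd (Set.mem_image_of_mem _ hβ₀Θ)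
    have hβ₀norm : ‖Ψ N β₀ ω‖ < η := by
      have := h1 β₀ hβ₀Θ
      rwa [hzero, sub_zero] at this
    have hup : Q N β₀ ω ≤ (N : ℝ) * (C₁ * η ^ 2) := by
      rw [hQform]
      have hx2 := (hbd (Ψ N β₀ ω)).2
      have hsq : ‖Ψ N β₀ ω‖ ^ 2 ≤ η ^ 2 :=
        pow_le_pow_left₀ (norm_nonneg _) hβ₀norm.le 2
      have hq : qf ((Vhat N ω)⁻¹) (Ψ N β₀ ω) ≤ C₁ * η ^ 2 :=
        hx2.trans (mul_le_mul_of_nonneg_left hsq hC₁pos.le)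
      exact mul_le_mul_of_nonneg_left hq hNn
    have hlow : (N : ℝ) * (c₁ * (δ / 2) ^ 2) ≤ Q N (βc N ω) ω := by
      rw [hQform]
      have hmb : δ ≤ ‖m (βc N ω)‖ := hδK _ hbK
      have hdiff : ‖Ψ N (βc N ω) ω - m (βc N ω)‖ < η := h1 _ (hKΘ hbK)
      have hnorm : δ / 2 ≤ ‖Ψ N (βc N ω) ω‖ := by
        have htri : ‖m (βc N ω)‖ - ‖Ψ N (βc N ω) ω‖ ≤ ‖Ψ N (βc N ω) ω - m (βc N ω)‖ := by
          have h := norm_sub_norm_le (m (βc N ω)) (Ψ N (βc N ω) ω)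
          rwa [norm_sub_rev (m (βc N ω)) (Ψ N (βc N ω) ω)] at h
        linarith
      have hx1 := (hbd (Ψ N (βc N ω) ω)).1
      have hsq : (δ / 2) ^ 2 ≤ ‖Ψ N (βc N ω) ω‖ ^ 2 :=
        pow_le_pow_left₀ (by positivity) hnorm 2
      have hq : c₁ * (δ / 2) ^ 2 ≤ qf ((Vhat N ω)⁻¹) (Ψ N (βc N ω) ω) :=
        le_trans (mul_le_mul_of_nonneg_left hsq hc₁pos.le) hx1
      exact mul_le_mul_of_nonneg_left hq hNn
    have hchain := hmin N ω
    have hNg : 1 < (N : ℝ) * g := by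
      have hcast : (N₀ : ℝ) ≤ (N : ℝ) := Nat.cast_le.2 hN
      have h1g : 1 / g < (N : ℝ) := lt_of_lt_of_le hN₀ hcast
      calc (1 : ℝ) = (1 / g) * g := by field_simp
        _ < (N : ℝ) * g := mul_lt_mul_of_pos_right h1g hgpos
    have hexpand : (N : ℝ) * g = (N : ℝ) * (c₁ * (δ / 2) ^ 2) - (N : ℝ) * (C₁ * η ^ 2) := by
      rw [hgdef]; ring
    have habs3 := abs_lt.1 h3
    linarith
  -- bad events
  obtain ⟨s2, hs2def⟩ : ∃ s2 : ℕ → (Fin J × Fin p) × (Fin J × Fin p) → Set Ω,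
      s2 = fun N i => {ω | τ ≤ dist ((Vhat N ω)⁻¹ i.1 i.2) (W i.1 i.2)} := ⟨_, rfl⟩
  obtain ⟨B1, hB1def⟩ : ∃ B1 : ℕ → Set Ω,
      B1 = fun N => {ω | ∃ β ∈ Θ, η ≤ ‖Ψ N β ω - m β‖} := ⟨_, rfl⟩
  obtain ⟨B3, hB3def⟩ : ∃ B3 : ℕ → Set Ω,
      B3 = fun N => {ω | 1 ≤ dist (err N ω) 0} := ⟨_, rfl⟩
  obtain ⟨bound, hbounddef⟩ : ∃ bound : ℕ → ℝ≥0∞,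
      bound = fun N =>
        P (B1 N) + (∑ i : (Fin J × Fin p) × (Fin J × Fin p), P (s2 N i)) + P (B3 N) :=
    ⟨_, rfl⟩
  have hsubset : ∀ N, N₀ ≤ N →
      {ω | ε ≤ dist (βc N ω) β₀} ⊆ B1 N ∪ (⋃ i, s2 N i) ∪ B3 N := by
    intro N hN ω hω
    by_contra hni
    simp only [Set.mem_union, Set.mem_iUnion, not_or, not_exists] at hni
    obtain ⟨⟨hn1, hn2⟩, hn3⟩ := hni
    have h1 : ∀ β ∈ Θ, ‖Ψ N β ω - m β‖ < η := by
      intro β hβ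
      by_contra hc
      push_neg at hc
      rw [hB1def] at hn1
      exact hn1 ⟨β, hβ, hc⟩
    have h2 : ∀ k l, |(Vhat N ω)⁻¹ k l - W k l| < τ := by
      intro k l
      have hkl := hn2 (k, l)
      rw [hs2def] at hkl
      simp only [Set.mem_setOf_eq, not_le] at hkl
      rwa [Real.dist_eq] at hkl
    have h3 : |err N ω| < 1 := by
      rw [hB3def] at hn3
      have : ¬(1 ≤ dist (err N ω) 0) := hn3
      rw [Real.dist_eq, sub_zero] at this
      linarith [not_le.1 this]
    exact absurd hω (not_le.2 (key N hN ω h1 h2 h3))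
  have hPbound : ∀ N, N₀ ≤ N → P {ω | ε ≤ dist (βc N ω) β₀} ≤ bound N := by
    intro N hN
    calc P {ω | ε ≤ dist (βc N ω) β₀}
        ≤ P (B1 N ∪ (⋃ i, s2 N i) ∪ B3 N) := measure_mono (hsubset N hN)
      _ ≤ P (B1 N ∪ (⋃ i, s2 N i)) + P (B3 N) := measure_union_le _ _
      _ ≤ P (B1 N) + P (⋃ i, s2 N i) + P (B3 N) := by
          gcongr
          exact measure_union_le _ _
      _ ≤ bound N := by
          rw [hbounddef]
          dsimp only
          gcongr
          calc P (⋃ i, s2 N i) ≤ ∑' i, P (s2 N i) := measure_iUnion_le _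
            _ = ∑ i : (Fin J × Fin p) × (Fin J × Fin p), P (s2 N i) := tsum_fintype _
  have hboundto : Tendsto bound atTop (nhds 0) := by
    have h1 : Tendsto (fun N => P (B1 N)) atTop (nhds 0) := by
      rw [hB1def]; exact hunif η hηpos
    have h2 : ∀ i : (Fin J × Fin p) × (Fin J × Fin p),
        Tendsto (fun N => P (s2 N i)) atTop (nhds 0) := by
      intro i
      rw [hs2def]
      have := tendstoInMeasure_iff_dist.1 (hVinvconv i.1 i.2) τ hτpos
      rw [hWdef]
      exact this
    have h3 : Tendsto (fun N => P (B3 N)) atTop (nhds 0) := by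
      rw [hB3def]; exact tendstoInMeasure_iff_dist.1 herr 1 one_pos
    have hsum : Tendsto (fun N => ∑ i : (Fin J × Fin p) × (Fin J × Fin p), P (s2 N i))
        atTop (nhds 0) := by
      have := tendsto_finset_sum (Finset.univ : Finset ((Fin J × Fin p) × (Fin J × Fin p)))
        (fun i _ => h2 i)
      simpa using this
    have hall := (h1.add hsum).add h3
    rw [hbounddef]
    simpa using hall
  refine tendsto_of_tendsto_of_tendsto_of_le_of_le' tendsto_const_nhds hboundto ?_ ?_
  · exact Filter.Eventually.of_forall fun N => zero_le'
  · exact Filter.eventually_atTop.2 ⟨N₀, hPbound⟩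
end

section
/- (Uniform convergence of the normalized GMM objective; key step in the proof of Theorem 1.) Suppose: Θ ⊂ ℝ^p is a set on which sup_{β∈Θ} ‖m(β)‖ < ∞; sup_{β∈Θ} ‖Ψ_N(β) − m(β)‖ → 0 in probability; V̂_N are random symmetric q×q matrices, invertible with probability tending to one, whose inverses V̂_N⁻¹ converge in probability to v(β₀)⁻¹ for a symmetric positive definite matrix v(β₀). Then sup_{β∈Θ} |(1/N) Q_N(β) − Q₀(β)| → 0 in probability as N → ∞, where Q_N(β) = N Ψ_N(β)ᵀ V̂_N⁻¹ Ψ_N(β) and Q₀(β) = m(β)ᵀ v(β₀)⁻¹ m(β). -/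
open MeasureTheory ProbabilityTheory Filter Matrix
open scoped ENNReal NNReal RealInnerProductSpace BigOperators Classical

private lemma coord_le_norm {q : ℕ} (x : EuclideanSpace ℝ (Fin q)) (k : Fin q) :
    |x k| ≤ ‖x‖ := by
  rw [EuclideanSpace.norm_eq]
  rw [show |x k| = Real.sqrt (|x k| ^ 2) from (Real.sqrt_sq (abs_nonneg _)).symm]
  apply Real.sqrt_le_sqrt
  rw [sq_abs]
  calc (x k) ^ 2 ≤ ∑ i, (x i) ^ 2 :=
        Finset.single_le_sum (f := fun i => x i ^ 2) (fun i _ => sq_nonneg _) (Finset.mem_univ k)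
    _ = ∑ i, ‖x i‖ ^ 2 := by simp [Real.norm_eq_abs, sq_abs]

private lemma quad_term_bound (xk xl yk yl W A δ K' : ℝ)
    (h1 : |xk - yk| ≤ δ) (h2 : |xl - yl| ≤ δ) (h3 : |W - A| ≤ δ)
    (h4 : |yk| ≤ K') (h5 : |yl| ≤ K') (hδ : 0 ≤ δ) (hK : 0 ≤ K') :
    |xk * (W * xl) - yk * (A * yl)| ≤ (|A| + δ) * (δ * (2 * K' + δ)) + δ * K' ^ 2 := by
  have hW : |W| ≤ |A| + δ := by
    have := abs_sub_abs_le_abs_sub W A; linarith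
  have hxl : |xl| ≤ K' + δ := by
    have := abs_sub_abs_le_abs_sub xl yl; linarith
  have hdecomp : xk * (W * xl) - yk * (A * yl) =
      (xk - yk) * (W * xl) + yk * (W * (xl - yl)) + yk * ((W - A) * yl) := by ring
  rw [hdecomp]
  calc |(xk - yk) * (W * xl) + yk * (W * (xl - yl)) + yk * ((W - A) * yl)|
      ≤ |(xk - yk) * (W * xl)| + |yk * (W * (xl - yl))| + |yk * ((W - A) * yl)| :=
        (abs_add_le _ _).trans (add_le_add_left (abs_add_le _ _) _)
    _ = |xk - yk| * (|W| * |xl|) + |yk| * (|W| * |xl - yl|) + |yk| * (|W - A| * |yl|) := by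
        simp [abs_mul]
    _ ≤ δ * ((|A| + δ) * (K' + δ)) + K' * ((|A| + δ) * δ) + K' * (δ * K') := by
        gcongr <;> first | assumption | positivity
    _ = (|A| + δ) * (δ * (2 * K' + δ)) + δ * K' ^ 2 := by ring

private lemma quad_sum_bound {q : ℕ} (x y : Fin q → ℝ) (W A : Matrix (Fin q) (Fin q) ℝ)
    (δ K' : ℝ) (hδ : 0 ≤ δ) (hK : 0 ≤ K')
    (hx : ∀ k, |x k - y k| ≤ δ) (hy : ∀ k, |y k| ≤ K')
    (hW : ∀ k l, |W k l - A k l| ≤ δ) :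
    |∑ k, ∑ l, x k * (W k l * x l) - ∑ k, ∑ l, y k * (A k l * y l)| ≤
      (∑ k, ∑ l, |A k l|) * (δ * (2 * K' + δ)) +
        (q : ℝ) ^ 2 * (δ * (δ * (2 * K' + δ)) + δ * K' ^ 2) := by
  have h2 : ∑ k, ∑ l, x k * (W k l * x l) - ∑ k, ∑ l, y k * (A k l * y l) =
      ∑ k, ∑ l, (x k * (W k l * x l) - y k * (A k l * y l)) := by
    simp [Finset.sum_sub_distrib]
  rw [h2]
  have h1 : |∑ k, ∑ l, (x k * (W k l * x l) - y k * (A k l * y l))| ≤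
      ∑ k : Fin q, ∑ l : Fin q, ((|A k l| + δ) * (δ * (2 * K' + δ)) + δ * K' ^ 2) := by
    refine (Finset.abs_sum_le_sum_abs _ _).trans ?_
    refine Finset.sum_le_sum fun k _ => ?_
    refine (Finset.abs_sum_le_sum_abs _ _).trans ?_
    exact Finset.sum_le_sum fun l _ =>
      quad_term_bound _ _ _ _ _ _ _ _ (hx k) (hx l) (hW k l) (hy k) (hy l) hδ hK
  refine h1.trans (le_of_eq ?_)
  simp only [add_mul, Finset.sum_add_distrib, Finset.sum_const, Finset.card_univ,
    Fintype.card_fin, nsmul_eq_mul, ← Finset.sum_mul]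
  ring

/-- **Uniform convergence of the normalized GMM objective** (key step in the proof of
Theorem 1). If `sup_Θ ‖m‖ < ∞`, `sup_Θ ‖Ψ_N − m‖ → 0` in probability, and the symmetric
random matrices `V̂_N` are invertible with probability tending to one with
`V̂_N⁻¹ → v(β₀)⁻¹` in probability, then `sup_Θ |Q_N/N − Q₀| → 0` in probability, where
`Q_N(β) = N Ψ_N(β)ᵀ V̂_N⁻¹ Ψ_N(β)` and `Q₀(β) = m(β)ᵀ v(β₀)⁻¹ m(β)`. -/
theorem dimm_uniform_convergence_objective
    {Ω : Type*} [MeasurableSpace Ω] (P : Measure Ω) [IsProbabilityMeasure P]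
    (p q : ℕ)
    -- the random functions Ψ_N and the fixed function m
    (Ψ : ℕ → EuclideanSpace ℝ (Fin p) → Ω → EuclideanSpace ℝ (Fin q))
    (hΨmeas : ∀ N, Measurable fun x : EuclideanSpace ℝ (Fin p) × Ω => Ψ N x.1 x.2)
    (m : EuclideanSpace ℝ (Fin p) → EuclideanSpace ℝ (Fin q))
    -- the fixed symmetric positive definite matrix v(β₀)
    (v₀ : Matrix (Fin q) (Fin q) ℝ) (hv₀ : v₀.PosDef)
    -- the set Θ, with m bounded on Θ
    (Θ : Set (EuclideanSpace ℝ (Fin p)))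
    (K : ℝ) (hK : ∀ β ∈ Θ, ‖m β‖ ≤ K)
    -- uniform convergence in probability of Ψ_N to m over Θ
    (hunif : ∀ ε : ℝ, 0 < ε →
      Tendsto (fun N => P {ω | ∃ β ∈ Θ, ε ≤ ‖Ψ N β ω - m β‖}) atTop (nhds (0 : ℝ≥0∞)))
    -- symmetric random weight matrices, invertible with probability tending to one,
    -- with V̂_N⁻¹ → v(β₀)⁻¹ in probability
    (Vhat : ℕ → Ω → Matrix (Fin q) (Fin q) ℝ)
    (hVmeas : ∀ N k l, Measurable fun ω => Vhat N ω k l)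
    (hVsymm : ∀ N ω, (Vhat N ω).IsSymm)
    (hVunit : Tendsto (fun N => P {ω | IsUnit (Vhat N ω)}) atTop (nhds (1 : ℝ≥0∞)))
    (hVinvconv : ∀ k l,
      TendstoInMeasure P (fun N ω => (Vhat N ω)⁻¹ k l) atTop (fun _ => v₀⁻¹ k l))
    -- the objectives
    (Q : ℕ → EuclideanSpace ℝ (Fin p) → Ω → ℝ)
    (hQ : ∀ N β ω, Q N β ω =
      (N : ℝ) * ∑ k, ∑ l, Ψ N β ω k * ((Vhat N ω)⁻¹ k l * Ψ N β ω l))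
    (Q₀ : EuclideanSpace ℝ (Fin p) → ℝ)
    (hQ₀ : ∀ β, Q₀ β = ∑ k, ∑ l, m β k * (v₀⁻¹ k l * m β l)) :
    -- conclusion: sup_{β ∈ Θ} |(1/N) Q_N(β) − Q₀(β)| → 0 in probability
    ∀ ε : ℝ, 0 < ε →
      Tendsto (fun N : ℕ => P {ω | ∃ β ∈ Θ, ε ≤ |(N : ℝ)⁻¹ * Q N β ω - Q₀ β|})
        atTop (nhds (0 : ℝ≥0∞)) := by
  intro ε hε
  set A := v₀⁻¹ with hAdef
  set K' : ℝ := max K 0 with hK'def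
  have hK'0 : (0:ℝ) ≤ K' := le_max_right _ _
  set C : ℝ := ∑ k, ∑ l, |A k l| with hCdef
  have hC0 : (0:ℝ) ≤ C :=
    Finset.sum_nonneg fun _ _ => Finset.sum_nonneg fun _ _ => abs_nonneg _
  set D : ℝ := (C + (q:ℝ)^2) * (2*K' + 1) + (q:ℝ)^2 * K'^2 + 1 with hDdef
  have hD1 : (1:ℝ) ≤ D := by
    nlinarith [sq_nonneg (q:ℝ), sq_nonneg K', mul_nonneg hC0 hK'0,
      mul_nonneg (sq_nonneg (q:ℝ)) hK'0, mul_nonneg (sq_nonneg (q:ℝ)) (sq_nonneg K')]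
  have hD0 : (0:ℝ) < D := by linarith
  set δ : ℝ := min 1 (ε / (2*D)) with hδdef
  have hδ0 : (0:ℝ) < δ := lt_min one_pos (by positivity)
  have hδ1 : δ ≤ 1 := min_le_left _ _
  have hδε : δ ≤ ε / (2*D) := min_le_right _ _
  have keybound : C * (δ*(2*K'+δ)) + (q:ℝ)^2 * (δ*(δ*(2*K'+δ)) + δ*K'^2) < ε := by
    have h1 : δ * D ≤ ε / 2 := by
      have := mul_le_mul_of_nonneg_right hδε hD0.le
      calc δ * D ≤ (ε / (2*D)) * D := this
        _ = ε / 2 := by field_simp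
    have h1δ : (0:ℝ) ≤ 1 - δ := by linarith
    nlinarith [mul_nonneg hC0 hδ0.le, mul_nonneg (sq_nonneg (q:ℝ)) hδ0.le,
      mul_nonneg (mul_nonneg (sq_nonneg (q:ℝ)) hδ0.le) hδ0.le,
      mul_nonneg (mul_nonneg hC0 hδ0.le) h1δ,
      mul_nonneg (mul_nonneg (mul_nonneg (sq_nonneg (q:ℝ)) hδ0.le) hδ0.le) h1δ,
      mul_nonneg (sq_nonneg (q:ℝ)) (sq_nonneg K')]
  -- the bounding sequence
  have hBad1 : Tendsto (fun N => P {ω | ∃ β ∈ Θ, δ ≤ ‖Ψ N β ω - m β‖}) atTop (nhds 0) :=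
    hunif δ hδ0
  have hBad2 : ∀ kl : Fin q × Fin q,
      Tendsto (fun N => P {ω | δ ≤ |(Vhat N ω)⁻¹ kl.1 kl.2 - A kl.1 kl.2|}) atTop (nhds 0) := by
    intro kl
    have := hVinvconv kl.1 kl.2 (ENNReal.ofReal δ) (ENNReal.ofReal_pos.mpr hδ0)
    refine this.congr (fun N => ?_)
    congr 1
    exact Set.ext fun ω => by
      simp only [Set.mem_setOf_eq, edist_dist, Real.dist_eq]
      exact ENNReal.ofReal_le_ofReal_iff (abs_nonneg _)
  have hsumto : Tendsto (fun N => ∑ kl : Fin q × Fin q,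
      P {ω | δ ≤ |(Vhat N ω)⁻¹ kl.1 kl.2 - A kl.1 kl.2|}) atTop (nhds 0) := by
    have := tendsto_finset_sum (Finset.univ : Finset (Fin q × Fin q))
      (fun kl _ => hBad2 kl)
    simpa using this
  have hboundto : Tendsto (fun N => P {ω | ∃ β ∈ Θ, δ ≤ ‖Ψ N β ω - m β‖}
      + ∑ kl : Fin q × Fin q, P {ω | δ ≤ |(Vhat N ω)⁻¹ kl.1 kl.2 - A kl.1 kl.2|})
      atTop (nhds 0) := by
    have := Tendsto.add hBad1 hsumto
    simpa using this
  refine tendsto_of_tendsto_of_tendsto_of_le_of_le' tendsto_const_nhds hboundto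
    (Eventually.of_forall fun N => zero_le) ?_
  filter_upwards [eventually_ge_atTop 1] with N hN
  have hsub : {ω | ∃ β ∈ Θ, ε ≤ |(N:ℝ)⁻¹ * Q N β ω - Q₀ β|} ⊆
      {ω | ∃ β ∈ Θ, δ ≤ ‖Ψ N β ω - m β‖} ∪
      ⋃ kl : Fin q × Fin q, {ω | δ ≤ |(Vhat N ω)⁻¹ kl.1 kl.2 - A kl.1 kl.2|} := by
    intro ω hω
    by_contra hcon
    simp only [Set.mem_union, Set.mem_iUnion, Set.mem_setOf_eq, not_or, not_exists] at hcon
    obtain ⟨h1, h2⟩ := hcon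
    push_neg at h1 h2
    obtain ⟨β, hβ, hεβ⟩ := hω
    have hNne : (N:ℝ) ≠ 0 := Nat.cast_ne_zero.mpr (by omega)
    have hQval : (N:ℝ)⁻¹ * Q N β ω =
        ∑ k, ∑ l, Ψ N β ω k * ((Vhat N ω)⁻¹ k l * Ψ N β ω l) := by
      rw [hQ]; field_simp
    rw [hQval, hQ₀] at hεβ
    have hxk : ∀ k, |Ψ N β ω k - m β k| ≤ δ := by
      intro k
      have hc := coord_le_norm (Ψ N β ω - m β) k
      have hn : ‖Ψ N β ω - m β‖ ≤ δ := (h1 β hβ).le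
      simpa using hc.trans hn
    have hyk : ∀ k, |m β k| ≤ K' :=
      fun k => (coord_le_norm (m β) k).trans ((hK β hβ).trans (le_max_left _ _))
    have hWb : ∀ k l, |(Vhat N ω)⁻¹ k l - A k l| ≤ δ := fun k l => (h2 (k, l)).le
    have hq := quad_sum_bound (fun k => Ψ N β ω k) (fun k => m β k)
      ((Vhat N ω)⁻¹) A δ K' hδ0.le hK'0 hxk hyk hWb
    have : ε ≤ C * (δ*(2*K'+δ)) + (q:ℝ)^2 * (δ*(δ*(2*K'+δ)) + δ*K'^2) := by
      rw [hCdef]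
      calc ε ≤ |∑ k, ∑ l, Ψ N β ω k * ((Vhat N ω)⁻¹ k l * Ψ N β ω l)
          - ∑ k, ∑ l, m β k * (A k l * m β l)| := hεβ
        _ ≤ _ := hq
    linarith
  calc P {ω | ∃ β ∈ Θ, ε ≤ |(N:ℝ)⁻¹ * Q N β ω - Q₀ β|}
      ≤ P ({ω | ∃ β ∈ Θ, δ ≤ ‖Ψ N β ω - m β‖} ∪
        ⋃ kl : Fin q × Fin q, {ω | δ ≤ |(Vhat N ω)⁻¹ kl.1 kl.2 - A kl.1 kl.2|}) :=
        measure_mono hsub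
    _ ≤ P {ω | ∃ β ∈ Θ, δ ≤ ‖Ψ N β ω - m β‖}
        + P (⋃ kl : Fin q × Fin q, {ω | δ ≤ |(Vhat N ω)⁻¹ kl.1 kl.2 - A kl.1 kl.2|}) :=
        measure_union_le _ _
    _ ≤ P {ω | ∃ β ∈ Θ, δ ≤ ‖Ψ N β ω - m β‖}
        + ∑ kl : Fin q × Fin q, P {ω | δ ≤ |(Vhat N ω)⁻¹ kl.1 kl.2 - A kl.1 kl.2|} := by
        gcongr
        exact (measure_iUnion_le _).trans (le_of_eq (tsum_fintype _))
end
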